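/- arXiv:2005.04556 — 2 statements merged into one kernel-verified Lean document; each statement's English description precedes it below -/
import Mathlib

section
/- Every hypergraph H = (V,F) admits a minimum-width tree decomposition (T,(B_t)) of its 2-section [H]₂ together with an assignment b : F → T such that all vertices of f lie in the bag B_{b(f)} for each hyperedge f, and for each vertex v, the set of nodes whose bags contain v equals the vertex set of the subtree of T induced by the union of the paths in T between b(f_i) and b(f_j) over all pairs of hyperedges f_i, f_j containing v. -/
open Finset

/-- A simple, loopless hypergraph: hyperedges have at least 2 vertices, no hyperedge
contains another, and every vertex lies in some hyperedge. -/
structure Hypergraph' (V : Type) [Fintype V] [DecidableEq V] where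
  F : Finset (Finset V)
  no_loops : ∀ f ∈ F, 2 ≤ f.card
  simple : ∀ f ∈ F, ∀ g ∈ F, f ⊆ g → f = g
  cover : ∀ v : V, ∃ f ∈ F, v ∈ f

variable {V : Type} [Fintype V] [DecidableEq V]

/-- A hypergraph is linear if distinct hyperedges share at most one vertex. -/
def Hypergraph'.Linear (H : Hypergraph' V) : Prop :=
  ∀ f ∈ H.F, ∀ g ∈ H.F, f ≠ g → (f ∩ g).card ≤ 1

/-- The degree of a vertex: the number of hyperedges containing it. -/
def Hypergraph'.deg (H : Hypergraph' V) (v : V) : ℕ :=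
  (H.F.filter (fun f => v ∈ f)).card

/-- The 2-section of a hypergraph. -/
def Hypergraph'.twoSection (H : Hypergraph' V) : SimpleGraph V where
  Adj u v := u ≠ v ∧ ∃ f ∈ H.F, u ∈ f ∧ v ∈ f
  symm := ⟨by
    rintro u v ⟨h, f, hf, h1, h2⟩
    exact ⟨h.symm, f, hf, h2, h1⟩⟩
  loopless := ⟨fun v h => h.1 rfl⟩

/-- The rank: the maximum size of a hyperedge. -/
def Hypergraph'.rank (H : Hypergraph' V) : ℕ := H.F.sup Finset.card

/-- The anti-rank: the minimum size of a hyperedge. -/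
noncomputable def Hypergraph'.antiRank (H : Hypergraph' V) : ℕ :=
  sInf (Finset.card '' (H.F : Set (Finset V)))

/-- The minimum degree. -/
noncomputable def Hypergraph'.minDegree (H : Hypergraph' V) : ℕ :=
  sInf (Set.range H.deg)

/-- The maximum degree. -/
def Hypergraph'.maxDegree (H : Hypergraph' V) : ℕ :=
  Finset.univ.sup H.deg

/-- The average rank: the average size of a hyperedge. -/
noncomputable def Hypergraph'.avgRank (H : Hypergraph' V) : ℝ :=
  (∑ f ∈ H.F, (f.card : ℝ)) / H.F.card

/-- A tree decomposition of a graph. -/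
structure TreeDecomp {W : Type} (G : SimpleGraph W) where
  τ : Type
  finT : Fintype τ
  tree : SimpleGraph τ
  conn : tree.Connected
  acyc : tree.IsAcyclic
  bags : τ → Finset W
  /-- (T1): the bags containing a vertex form a nonempty connected subtree. -/
  bags_conn : ∀ v : W, (tree.induce {t | v ∈ bags t}).Connected
  /-- (T2): every edge is contained in some bag. -/
  bags_edge : ∀ u v : W, G.Adj u v → ∃ t, u ∈ bags t ∧ v ∈ bags t

/-- The width of a tree decomposition: max bag size minus one. -/
noncomputable def TreeDecomp.width {W : Type} {G : SimpleGraph W} (d : TreeDecomp G) : ℕ :=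
  letI := d.finT
  (Finset.univ.sup fun t => (d.bags t).card) - 1

/-- The treewidth of a graph. -/
noncomputable def treewidth {W : Type} (G : SimpleGraph W) : ℕ :=
  sInf {n | ∃ d : TreeDecomp G, d.width = n}

/-- A supertree decomposition of a hypergraph. -/
structure SupertreeDecomp (H : Hypergraph' V) extends TreeDecomp H.twoSection where
  lam : τ → Finset (Finset V)
  lam_sub : ∀ t, lam t ⊆ H.F
  /-- (TII): every bag is covered by its hyperedges. -/
  bag_cover : ∀ t, ∀ v ∈ bags t, ∃ f ∈ lam t, v ∈ f
  /-- (TIII): the nodes containing a hyperedge form a nonempty connected subtree. -/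
  lam_conn : ∀ f ∈ H.F, (tree.induce {t | f ∈ lam t}).Connected
  /-- (TIV): intersecting hyperedges appear together in some bag. -/
  lam_meet : ∀ f ∈ H.F, ∀ g ∈ H.F, (f ∩ g).Nonempty → ∃ t, f ∈ lam t ∧ g ∈ lam t

/-- The width of a supertree decomposition: max number of hyperedges in a bag. -/
noncomputable def SupertreeDecomp.width {H : Hypergraph' V} (d : SupertreeDecomp H) : ℕ :=
  letI := d.finT
  Finset.univ.sup fun t => (d.lam t).card

/-- The supertree width of a hypergraph. -/
noncomputable def stw (H : Hypergraph' V) : ℕ :=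
  sInf {n | ∃ d : SupertreeDecomp H, d.width = n}

/-- The line graph of a hypergraph. -/
def Hypergraph'.lineGraph (H : Hypergraph' V) : SimpleGraph {f // f ∈ H.F} where
  Adj f g := f ≠ g ∧ ((f : Finset V) ∩ (g : Finset V)).Nonempty
  symm := ⟨by
    rintro f g ⟨h, hfg⟩
    exact ⟨h.symm, by rwa [Finset.inter_comm]⟩⟩
  loopless := ⟨fun f h => h.1 rfl⟩

/-- A hypergraph is 2-regular if every vertex has degree exactly 2. -/
def Hypergraph'.TwoRegular (H : Hypergraph' V) : Prop := ∀ v : V, H.deg v = 2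

/-- For a 2-regular linear hypergraph, the dual is a simple graph on the hyperedges:
two hyperedges are adjacent iff some vertex lies in both. -/
def Hypergraph'.dualGraph (H : Hypergraph' V) : SimpleGraph {f // f ∈ H.F} where
  Adj f g := f ≠ g ∧ ∃ v : V, v ∈ (f : Finset V) ∧ v ∈ (g : Finset V)
  symm := ⟨by
    rintro f g ⟨h, v, h1, h2⟩
    exact ⟨h.symm, v, h2, h1⟩⟩
  loopless := ⟨fun f h => h.1 rfl⟩

namespace TreeAux
open SimpleGraph

variable {τ : Type} {G : SimpleGraph τ}

/-- Membership in some path between `x` and `y`. -/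
def MemPath (G : SimpleGraph τ) (x y t : τ) : Prop :=
  ∃ p : G.Walk x y, p.IsPath ∧ t ∈ p.support

/-- A set closed under taking paths between its elements. -/
def PathClosed (G : SimpleGraph τ) (S : Set τ) : Prop :=
  ∀ x ∈ S, ∀ y ∈ S, ∀ t, MemPath G x y t → t ∈ S

lemma reachable_induce_of_support_subset {S : Set τ} :
    ∀ {x y : τ} (p : G.Walk x y) (_ : ∀ z ∈ p.support, z ∈ S) (hx : x ∈ S) (hy : y ∈ S),
    (G.induce S).Reachable ⟨x, hx⟩ ⟨y, hy⟩ := by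
  intro x y p
  induction p with
  | nil => intro _ hx hy; rfl
  | @cons a b c h p ih =>
    intro hsub hx hy
    have hb : b ∈ S := hsub b (by simp)
    have hadj : (G.induce S).Adj ⟨a, hx⟩ ⟨b, hb⟩ := h
    exact (hadj.reachable).trans (ih (fun z hz => hsub z (by simp [hz])) hb hy)

/-- Promote a walk of an induced subgraph to a walk of the ambient graph,
with support inside the set. -/
lemma exists_walk_of_induce {S : Set τ} :
    ∀ {x y : ↥S} (w : (G.induce S).Walk x y),
    ∃ p : G.Walk x.1 y.1, ∀ z ∈ p.support, z ∈ S := by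
  intro x y w
  induction w with
  | @nil u => exact ⟨Walk.nil, by rintro z hz; simp at hz; subst hz; exact u.2⟩
  | @cons a b c h w ih =>
    obtain ⟨p, hp⟩ := ih
    exact ⟨Walk.cons h p, by
      intro z hz
      change z ∈ a.1 :: p.support at hz
      rcases List.mem_cons.mp hz with rfl | hz
      · exact a.2
      · exact hp z hz⟩

lemma pathClosed_of_induce_connected [DecidableEq τ] {S : Set τ}
    (ha : G.IsAcyclic) (hc : (G.induce S).Connected) : PathClosed G S := by
  rintro x hx y hy t ⟨p, hp, ht⟩
  obtain ⟨w⟩ := hc.preconnected ⟨x, hx⟩ ⟨y, hy⟩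
  obtain ⟨q, hq⟩ := exists_walk_of_induce w
  have hw : q.toPath = (⟨p, hp⟩ : G.Path x y) := ha.path_unique _ _
  have hsub : ∀ z ∈ p.support, z ∈ S := by
    intro z hz
    have : z ∈ (q.toPath : G.Walk x y).support := by rw [hw]; exact hz
    exact hq z (Walk.support_toPath_subset _ this)
  exact hsub t ht

/-- Split a walk at the first vertex lying in a set `X` (given the endpoint is in `X`). -/
lemma exists_first_mem (X : Set τ) [DecidablePred (· ∈ X)] :
    ∀ {a b : τ} (p : G.Walk a b) (_ : b ∈ X),
    ∃ (m : τ) (q : G.Walk a m) (r : G.Walk m b),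
      p = q.append r ∧ m ∈ X ∧ ∀ x ∈ q.support, x ∈ X → x = m := by
  intro a b p
  induction p with
  | @nil u =>
    intro hb
    exact ⟨u, Walk.nil, Walk.nil, rfl, hb, by intro x hx _; simpa using hx⟩
  | @cons a c b h p ih =>
    intro hb
    by_cases haX : a ∈ X
    · exact ⟨a, Walk.nil, Walk.cons h p, rfl, haX, by intro x hx _; simpa using hx⟩
    · obtain ⟨m, q, r, heq, hm, hfirst⟩ := ih hb
      refine ⟨m, Walk.cons h q, r, by rw [Walk.cons_append, heq], hm, ?_⟩
      intro x hx hxX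
      rw [Walk.support_cons] at hx
      rcases List.mem_cons.mp hx with rfl | hx
      · exact absurd hxX haX
      · exact hfirst x hx hxX

/-- Median lemma: any three paths pairwise joining `a`, `b`, `c` in a forest have a
common vertex. -/
lemma median [DecidableEq τ] (ha : G.IsAcyclic) {a b c : τ}
    (pab : G.Walk a b) (hab : pab.IsPath)
    (pcb : G.Walk c b) (hcb : pcb.IsPath)
    (pac : G.Walk a c) (hac : pac.IsPath) :
    ∃ m, m ∈ pab.support ∧ m ∈ pcb.support ∧ m ∈ pac.support := by
  classical
  obtain ⟨m, q, r, heq, hm, hfirst⟩ :=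
    exists_first_mem {x | x ∈ pcb.support} pab pcb.end_mem_support
  have hq : q.IsPath := (heq ▸ hab).of_append_left
  set s : G.Walk c m := pcb.takeUntil m hm with hs
  have hspath : s.IsPath := hcb.takeUntil hm
  have hcand : (q.append s.reverse).IsPath := by
    rw [Walk.isPath_def, Walk.support_append]
    refine List.Nodup.append hq.support_nodup ?_ ?_
    · exact (hspath.reverse.support_nodup).sublist (List.tail_sublist _)
    · intro x hxq hxt
      have hxs : x ∈ s.support := by
        have := List.Sublist.mem hxt (List.tail_sublist _)
        rwa [Walk.support_reverse, List.mem_reverse] at this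
      have hxX : x ∈ pcb.support := Walk.support_takeUntil_subset _ hm hxs
      have hxm : x = m := hfirst x hxq hxX
      subst hxm
      -- but m is the head of s.reverse.support, which is nodup, so m ∉ tail
      have hnd := hspath.reverse.support_nodup
      have : s.reverse.support = x :: s.reverse.support.tail := by
        cases hsup : s.reverse.support with
        | nil => exact absurd hsup (by simp [Walk.support_ne_nil])
        | cons y l =>
          have hyx : y = x := by
            have := Walk.support_eq_cons s.reverse
            rw [hsup] at this
            exact (List.cons_eq_cons.mp this).1
          subst hyx
          simp
      rw [this] at hnd
      exact (List.nodup_cons.mp hnd).1 hxt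
  have huniq : (⟨q.append s.reverse, hcand⟩ : G.Path a c) = ⟨pac, hac⟩ :=
    ha.path_unique _ _
  have hmac : m ∈ pac.support := by
    have : m ∈ (q.append s.reverse).support := by
      rw [Walk.support_append]
      exact List.mem_append_left _ q.end_mem_support
    rw [show pac = (q.append s.reverse) from congrArg Subtype.val huniq.symm]
    exact this
  refine ⟨m, ?_, hm, hmac⟩
  rw [heq, Walk.support_append]
  exact List.mem_append_left _ q.end_mem_support

lemma memPath_symm {x y t : τ} (h : MemPath G x y t) : MemPath G y x t := by
  obtain ⟨p, hp, ht⟩ := h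
  exact ⟨p.reverse, hp.reverse, by rwa [Walk.support_reverse, List.mem_reverse]⟩

/-- Helly property for three path-closed sets in a tree. -/
lemma helly3 (hc : G.Connected) (ha : G.IsAcyclic) {X Y Z : Set τ}
    (hX : PathClosed G X) (hY : PathClosed G Y) (hZ : PathClosed G Z)
    (hXY : ∃ t, t ∈ X ∧ t ∈ Y) (hYZ : ∃ t, t ∈ Y ∧ t ∈ Z)
    (hXZ : ∃ t, t ∈ X ∧ t ∈ Z) :
    ∃ m, m ∈ X ∧ m ∈ Y ∧ m ∈ Z := by
  classical
  obtain ⟨aa, haY, haZ⟩ := hYZ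
  obtain ⟨bb, hbX, hbZ⟩ := hXZ
  obtain ⟨cc, hcX, hcY⟩ := hXY
  obtain ⟨pab⟩ := hc.preconnected aa bb
  obtain ⟨pcb⟩ := hc.preconnected cc bb
  obtain ⟨pac⟩ := hc.preconnected aa cc
  obtain ⟨m, h1, h2, h3⟩ := median ha (pab.toPath : G.Path aa bb).1 (pab.toPath).2
    (pcb.toPath : G.Path cc bb).1 (pcb.toPath).2 (pac.toPath : G.Path aa cc).1 (pac.toPath).2
  exact ⟨m, hX cc hcX bb hbX m ⟨_, (pcb.toPath).2, h2⟩,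
    hY aa haY cc hcY m ⟨_, (pac.toPath).2, h3⟩,
    hZ aa haZ bb hbZ m ⟨_, (pab.toPath).2, h1⟩⟩

/-- Helly property for a finite family of path-closed sets in a tree. -/
lemma helly (hc : G.Connected) (ha : G.IsAcyclic) {ι : Type} [DecidableEq ι]
    (s : Finset ι) (hs : s.Nonempty) (S : ι → Set τ)
    (hcl : ∀ i ∈ s, PathClosed G (S i))
    (hpair : ∀ i ∈ s, ∀ j ∈ s, ∃ t, t ∈ S i ∧ t ∈ S j) :
    ∃ t, ∀ i ∈ s, t ∈ S i := by
  classical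
  induction s using Finset.induction_on generalizing S with
  | empty => exact absurd hs (by simp)
  | @insert a u hau ih =>
    rcases u.eq_empty_or_nonempty with rfl | hu
    · obtain ⟨t, ht, -⟩ := hpair a (by simp) a (by simp)
      exact ⟨t, by simpa using ht⟩
    · obtain ⟨i₀, hi₀⟩ := hu
      set S' : ι → Set τ := Function.update S i₀ (S i₀ ∩ S a) with hS'
      have hS'cl : ∀ i ∈ u, PathClosed G (S' i) := by
        intro i hi
        rcases eq_or_ne i i₀ with rfl | hne
        · rw [hS', Function.update_self]
          intro x hx y hy t ht
          exact ⟨hcl i (by simp [hi]) x hx.1 y hy.1 t ht,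
            hcl a (by simp) x hx.2 y hy.2 t ht⟩
        · rw [hS', Function.update_of_ne hne]
          exact hcl i (by simp [hi])
      have hS'pair : ∀ i ∈ u, ∀ j ∈ u, ∃ t, t ∈ S' i ∧ t ∈ S' j := by
        intro i hi j hj
        have h3 : ∀ k ∈ u, ∃ t, t ∈ S k ∧ t ∈ S i₀ ∧ t ∈ S a := by
          intro k hk
          exact helly3 hc ha (hcl k (by simp [hk])) (hcl i₀ (by simp [hi₀])) (hcl a (by simp))
            (hpair k (by simp [hk]) i₀ (by simp [hi₀]))
            (hpair i₀ (by simp [hi₀]) a (by simp))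
            (hpair k (by simp [hk]) a (by simp))
        have key : ∀ t, t ∈ S i₀ → t ∈ S a → ∀ k, t ∈ S k → t ∈ S' k := by
          intro t h0 hA k hk
          by_cases hk0 : k = i₀
          · subst hk0; rw [hS', Function.update_self]; exact ⟨h0, hA⟩
          · rw [hS', Function.update_of_ne hk0]; exact hk
        by_cases hi0 : i = i₀
        · obtain ⟨t, h1, h2, h3'⟩ := h3 j hj
          exact ⟨t, key t h2 h3' i (by rw [hi0]; exact h2), key t h2 h3' j h1⟩
        · by_cases hj0 : j = i₀
          · obtain ⟨t, h1, h2, h3'⟩ := h3 i hi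
            exact ⟨t, key t h2 h3' i h1, key t h2 h3' j (by rw [hj0]; exact h2)⟩
          · obtain ⟨t, h1, h2⟩ := hpair i (by simp [hi]) j (by simp [hj])
            rw [hS']
            exact ⟨t, by rw [Function.update_of_ne hi0]; exact h1,
              by rw [Function.update_of_ne hj0]; exact h2⟩
      obtain ⟨t, ht⟩ := ih ⟨i₀, hi₀⟩ S' hS'cl hS'pair
      refine ⟨t, ?_⟩
      intro i hi
      rcases Finset.mem_insert.mp hi with rfl | hiu
      · have := ht i₀ hi₀
        rw [hS', Function.update_self] at this
        exact this.2
      · rcases eq_or_ne i i₀ with rfl | hne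
        · have := ht i hi₀
          rw [hS', Function.update_self] at this
          exact this.1
        · have := ht i hiu
          rwa [hS', Function.update_of_ne hne] at this

end TreeAux

/-- there is a minimum-width tree decomposition of `[H]₂` with an assignment
`b` of base nodes to hyperedges such that each hyperedge lies in the bag of its base node,
and the nodes whose bags contain a vertex `v` are exactly the nodes lying on the (unique)
paths between base nodes of hyperedges containing `v`. -/
theorem exists_min_treeDecomp_with_base (H : Hypergraph' V) :
    ∃ d : TreeDecomp H.twoSection, d.width = treewidth H.twoSection ∧
      ∃ b : {f // f ∈ H.F} → d.τ,
        (∀ f : {f // f ∈ H.F}, (f : Finset V) ⊆ d.bags (b f)) ∧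
        (∀ v : V, ∀ t : d.τ, v ∈ d.bags t ↔
          ∃ f g : {f // f ∈ H.F}, v ∈ (f : Finset V) ∧ v ∈ (g : Finset V) ∧
            ∃ p : d.tree.Walk (b f) (b g), p.IsPath ∧ t ∈ p.support) := by
  classical
  -- The set of widths of tree decompositions is nonempty (trivial decomposition).
  have hne : {n | ∃ d : TreeDecomp H.twoSection, d.width = n}.Nonempty := by
    refine ⟨_, ⟨⟨Unit, inferInstance, ⊥, ?_, ?_, fun _ => Finset.univ, ?_, ?_⟩, rfl⟩⟩
    · exact SimpleGraph.Connected.mk fun u v => by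
        cases u; cases v; exact SimpleGraph.Reachable.refl _
    · intro v c hc
      cases c with
      | nil => exact hc.ne_nil rfl
      | cons h p => exact h.elim
    · intro v
      haveI : Nonempty ↥{t : Unit | v ∈ (Finset.univ : Finset V)} := ⟨⟨(), by simp⟩⟩
      exact SimpleGraph.Connected.mk fun a b => by
        have hab : a = b := Subsingleton.elim a b
        rw [hab]
    · exact fun u v _ => ⟨(), by simp, by simp⟩
  obtain ⟨d, hd⟩ : ∃ d : TreeDecomp H.twoSection, d.width = treewidth H.twoSection :=
    Nat.sInf_mem hne
  letI := d.finT
  letI : DecidableEq d.τ := Classical.decEq _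
  -- The subtrees of bags containing a given vertex.
  set T : V → Set d.τ := fun v => {t | v ∈ d.bags t} with hT
  have hTcl : ∀ v, TreeAux.PathClosed d.tree (T v) := fun v =>
    TreeAux.pathClosed_of_induce_connected d.acyc (d.bags_conn v)
  have hTne : ∀ v, ∃ t, v ∈ d.bags t := fun v => by
    obtain ⟨⟨t, ht⟩⟩ := (d.bags_conn v).nonempty
    exact ⟨t, ht⟩
  -- A base node for each hyperedge, via the Helly property.
  have hbase : ∀ f : {f // f ∈ H.F}, ∃ t, ∀ v ∈ f.1, v ∈ d.bags t := by
    rintro ⟨f, hf⟩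
    have hfne : f.Nonempty := Finset.card_pos.mp (lt_of_lt_of_le two_pos (H.no_loops f hf))
    obtain ⟨t, ht⟩ := TreeAux.helly d.conn d.acyc f hfne T
      (fun v _ => hTcl v)
      (fun u hu w hw => by
        rcases eq_or_ne u w with rfl | hnew
        · obtain ⟨t, ht⟩ := hTne u
          exact ⟨t, ht, ht⟩
        · obtain ⟨t, h1, h2⟩ := d.bags_edge u w ⟨hnew, f, hf, hu, hw⟩
          exact ⟨t, h1, h2⟩)
    exact ⟨t, ht⟩
  choose b hb using hbase
  -- The new, pruned bags.
  set P : d.τ → V → Prop := fun t v => ∃ f g : {f // f ∈ H.F}, v ∈ f.1 ∧ v ∈ g.1 ∧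
      ∃ p : d.tree.Walk (b f) (b g), p.IsPath ∧ t ∈ p.support with hP
  set bags' : d.τ → Finset V := fun t => Finset.univ.filter (P t) with hbags'
  have hmem' : ∀ t v, v ∈ bags' t ↔ P t v := by
    intro t v
    simp [hbags', Finset.mem_filter]
  have hPmem : ∀ (f g : {f // f ∈ H.F}) (v : V), v ∈ f.1 → v ∈ g.1 →
      ∀ (p : d.tree.Walk (b f) (b g)), p.IsPath → ∀ z ∈ p.support, v ∈ bags' z := by
    intro f g v hvf hvg p hp z hz
    exact (hmem' z v).mpr ⟨f, g, hvf, hvg, p, hp, hz⟩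
  have hself : ∀ (f : {f // f ∈ H.F}) (v : V), v ∈ f.1 → v ∈ bags' (b f) := by
    intro f v hv
    exact hPmem f f v hv hv SimpleGraph.Walk.nil SimpleGraph.Walk.IsPath.nil (b f) (by simp)
  have hsub : ∀ t, bags' t ⊆ d.bags t := by
    intro t v hv
    obtain ⟨f, g, hvf, hvg, p, hp, ht⟩ := (hmem' t v).mp hv
    exact hTcl v (b f) (hb f v hvf) (b g) (hb g v hvg) t ⟨p, hp, ht⟩
  -- Assemble the pruned tree decomposition.
  refine ⟨⟨d.τ, d.finT, d.tree, d.conn, d.acyc, bags', ?_, ?_⟩, ?_, b, ?_, ?_⟩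
  · -- connectivity of the pruned subtrees
    intro v
    set S : Set d.τ := {t | v ∈ bags' t} with hS
    have hSsup : ∀ (f g : {f // f ∈ H.F}), v ∈ f.1 → v ∈ g.1 →
        ∀ (p : d.tree.Walk (b f) (b g)), p.IsPath → ∀ z ∈ p.support, z ∈ S :=
      fun f g hvf hvg p hp z hz => hPmem f g v hvf hvg p hp z hz
    obtain ⟨f₀, hf₀, hvf₀⟩ := H.cover v
    haveI : Nonempty ↥S := ⟨⟨b ⟨f₀, hf₀⟩, hself ⟨f₀, hf₀⟩ v hvf₀⟩⟩
    refine SimpleGraph.Connected.mk ?_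
    rintro ⟨t₁, h₁⟩ ⟨t₂, h₂⟩
    obtain ⟨f, g, hvf, hvg, p, hp, ht₁⟩ := (hmem' t₁ v).mp h₁
    obtain ⟨f', g', hvf', hvg', p', hp', ht₂⟩ := (hmem' t₂ v).mp h₂
    have hsup1 : ∀ z ∈ p.support, z ∈ S := hSsup f g hvf hvg p hp
    have hsup2 : ∀ z ∈ p'.support, z ∈ S := hSsup f' g' hvf' hvg' p' hp'
    have r1 : (d.tree.induce S).Reachable ⟨b f, hsup1 _ p.start_mem_support⟩ ⟨t₁, h₁⟩ :=
      TreeAux.reachable_induce_of_support_subset (p.takeUntil t₁ ht₁)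
        (fun z hz => hsup1 z (SimpleGraph.Walk.support_takeUntil_subset _ _ hz)) _ _
    have r2 : (d.tree.induce S).Reachable ⟨b f', hsup2 _ p'.start_mem_support⟩ ⟨t₂, h₂⟩ :=
      TreeAux.reachable_induce_of_support_subset (p'.takeUntil t₂ ht₂)
        (fun z hz => hsup2 z (SimpleGraph.Walk.support_takeUntil_subset _ _ hz)) _ _
    obtain ⟨w⟩ := d.conn.preconnected (b f) (b f')
    have hsup3 : ∀ z ∈ (w.toPath : d.tree.Walk (b f) (b f')).support, z ∈ S :=
      hSsup f f' hvf hvf' _ w.toPath.2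
    have r3 : (d.tree.induce S).Reachable ⟨b f, hsup1 _ p.start_mem_support⟩
        ⟨b f', hsup2 _ p'.start_mem_support⟩ :=
      TreeAux.reachable_induce_of_support_subset (w.toPath : d.tree.Walk (b f) (b f'))
        hsup3 _ _
    exact (r1.symm.trans r3).trans r2
  · -- edge condition
    rintro u v ⟨hnev, f, hf, hu, hv⟩
    exact ⟨b ⟨f, hf⟩, hself ⟨f, hf⟩ u hu, hself ⟨f, hf⟩ v hv⟩
  · -- width is minimum
    have hle : (Finset.univ.sup fun t => (bags' t).card) - 1 ≤
        (Finset.univ.sup fun t => (d.bags t).card) - 1 := by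
      refine Nat.sub_le_sub_right (Finset.sup_le fun t _ => ?_) 1
      exact le_trans (Finset.card_le_card (hsub t)) (Finset.le_sup (f := fun t => (d.bags t).card) (Finset.mem_univ t))
    refine le_antisymm ?_ ?_
    · exact le_trans hle (le_of_eq hd)
    · exact Nat.sInf_le ⟨_, rfl⟩
  · -- hyperedges in base bags
    intro f v hv
    exact hself f v hv
  · -- characterization of bags
    intro v t
    exact hmem' t v
end

section
/- Let Δ ≥ δ ≥ 2 be integers and 0 < s ≤ 1/2 a real with Δ ≤ 2δ² − 2δ. Define f(α,β) = α/Δ + β/Δ + (1/(δ(δ−1)))·(−α² + sα − β² + sβ). Then for all reals α, β with s ≤ α ≤ 1/2, s ≤ β ≤ 1/2, and α + β > 1/2, one has f(α,β) ≥ min{ f(1/2, s), f(1/2 − s, s) }. -/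
open Finset

variable {V : Type} [Fintype V] [DecidableEq V]

private lemma quad_min_aux (p q a b x : ℝ) (hq : 0 ≤ q) (ha : a ≤ x) (hb : x ≤ b) :
    min (p*a - q*a^2) (p*b - q*b^2) ≤ p*x - q*x^2 := by
  rcases le_or_gt (q*(x+a)) p with h | h
  · refine le_trans (min_le_left _ _) ?_
    have h3 : 0 ≤ (x - a) * (p - q*(x+a)) :=
      mul_nonneg (by linarith) (by linarith)
    nlinarith [h3]
  · refine le_trans (min_le_right _ _) ?_
    have h2 : p ≤ q*(x+b) := by nlinarith
    have h3 : 0 ≤ (b - x) * (q*(x+b) - p) :=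
      mul_nonneg (by linarith) (by linarith)
    nlinarith [h3]

set_option maxHeartbeats 1000000 in
/-- Appendix A: the optimization fact used in the proof of Theorem 1.1. -/
theorem appendixA_min (δ Δ : ℕ) (h2 : 2 ≤ δ) (hδΔ : δ ≤ Δ)
    (s : ℝ) (hs0 : 0 < s) (hs : s ≤ 1 / 2)
    (hcond : (Δ : ℝ) ≤ 2 * (δ : ℝ) ^ 2 - 2 * δ)
    (f : ℝ → ℝ → ℝ)
    (hf : ∀ α β : ℝ, f α β =
      α / (Δ : ℝ) + β / (Δ : ℝ)
        + (1 / ((δ : ℝ) * ((δ : ℝ) - 1))) * (-α ^ 2 + s * α - β ^ 2 + s * β)) :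
    ∀ α β : ℝ, s ≤ α → α ≤ 1 / 2 → s ≤ β → β ≤ 1 / 2 → 1 / 2 < α + β →
      min (f (1 / 2) s) (f (1 / 2 - s) s) ≤ f α β := by
  intro α β hsa ha2 hsb hb2 hab
  have hδ2 : (2:ℝ) ≤ (δ:ℝ) := by exact_mod_cast h2
  have hδpos : (0:ℝ) < (δ:ℝ) * ((δ:ℝ)-1) := by nlinarith
  have hDpos : (0:ℝ) < (Δ:ℝ) := by
    have : (2:ℝ) ≤ (Δ:ℝ) := by exact_mod_cast le_trans h2 hδΔ
    linarith
  set c : ℝ := 1 / ((δ:ℝ) * ((δ:ℝ)-1)) with hc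
  set P : ℝ := 1/(Δ:ℝ) + c*s with hP
  have hcpos : 0 < c := by rw [hc]; positivity
  have hfe : ∀ x y : ℝ, f x y = (P*x - c*x^2) + (P*y - c*y^2) := by
    intro x y; rw [hf, hP, hc]; field_simp; ring
  have hkey : c/2 ≤ 1/(Δ:ℝ) := by
    have h1 : c/2 = 1/(((δ:ℝ)*((δ:ℝ)-1))*2) := by rw [hc, div_div]
    rw [h1]
    exact one_div_le_one_div_of_le hDpos (by nlinarith)
  clear_value c P
  -- monotonicity: g s ≤ g (1/2)
  have gmono : P*s - c*s^2 ≤ P*(1/2:ℝ) - c*(1/2:ℝ)^2 := by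
    have hid : (P*(1/2:ℝ) - c*(1/2:ℝ)^2) - (P*s - c*s^2)
        = (1/2 - s) * ((1/(Δ:ℝ)) - c/2) + c * s * (1/2 - s) - c*s*(1/2-s) := by
      rw [hP]; ring
    nlinarith [mul_nonneg (by linarith : (0:ℝ) ≤ 1/2 - s) (by linarith : (0:ℝ) ≤ 1/(Δ:ℝ) - c/2)]
  rw [hfe, hfe, hfe]
  have hminA : min ((P*(1/2:ℝ) - c*(1/2:ℝ)^2) + (P*s - c*s^2))
      ((P*(1/2-s) - c*(1/2-s)^2) + (P*s - c*s^2)) ≤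
      (P*(1/2:ℝ) - c*(1/2:ℝ)^2) + (P*s - c*s^2) := min_le_left _ _
  have hminB : min ((P*(1/2:ℝ) - c*(1/2:ℝ)^2) + (P*s - c*s^2))
      ((P*(1/2-s) - c*(1/2-s)^2) + (P*s - c*s^2)) ≤
      (P*(1/2-s) - c*(1/2-s)^2) + (P*s - c*s^2) := min_le_right _ _
  rcases le_or_gt (1/2 - s) α with hcase | hcase
  · -- α ≥ 1/2 - s : constraint α+β ≥ 1/2 is slack
    have hα := quad_min_aux P c (1/2-s) (1/2) α hcpos.le hcase ha2
    have hβ := quad_min_aux P c s (1/2) β hcpos.le hsb hb2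
    rcases min_le_iff.mp hα with h1 | h1 <;> rcases min_le_iff.mp hβ with h2 | h2
    · exact le_trans hminB (by linarith)
    · exact le_trans hminB (by linarith)
    · exact le_trans hminA (by linarith)
    · exact le_trans hminA (by linarith)
  · -- α < 1/2 - s : then β ≥ 1/2 - α > s
    have hβ := quad_min_aux P c (1/2-α) (1/2) β hcpos.le (by linarith) hb2
    rcases min_le_iff.mp hβ with h1 | h1
    · -- g β ≥ g (1/2-α): reduce to boundary α+β = 1/2
      have h3 : (0:ℝ) ≤ c * (α - s) * (1 - 2*s - 2*α) :=
        mul_nonneg (mul_nonneg hcpos.le (by linarith)) (by linarith)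
      have hid : (P*α - c*α^2) + (P*(1/2-α) - c*(1/2-α)^2)
          - ((P*(1/2-s) - c*(1/2-s)^2) + (P*s - c*s^2))
          = c * (α - s) * (1 - 2*s - 2*α) := by ring
      exact le_trans hminB (by linarith)
    · have hα := quad_min_aux P c s (1/2) α hcpos.le hsa ha2
      rcases min_le_iff.mp hα with h2 | h2
      · exact le_trans hminA (by linarith)
      · exact le_trans hminA (by linarith)
end
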